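/- arXiv:1603.08097 — 3 statements merged into one kernel-verified Lean document; each statement's English description precedes it below -/
import Mathlib

section
/- Theorem 4. Let λ be a real number and let j, k, p be natural numbers with j ≥ 1 and (4j−2)p + 2k + 1 ≥ 2j. Then the series ∑_{r=p}^∞ arctan( λ·L_{2j−1}·L_{(4j−2)r+2k} / (L_{(8j−4)r+4k} − L_{4j−2} + λ²) ) converges and its sum equals arctan( λ / L_{(4j−2)p+2k−2j+1} ). -/
def lucas : ℕ → ℕ
  | 0 => 2
  | 1 => 1
  | n + 2 => lucas (n + 1) + lucas n

lemma lucas_add_two (n : ℕ) : lucas (n + 2) = lucas (n + 1) + lucas n := rfl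

lemma lucas_pos : ∀ n, 0 < lucas n := by
  intro n
  induction n using Nat.twoStepInduction with
  | zero => decide
  | one => decide
  | more n ih1 ih2 => rw [lucas_add_two]; omega

lemma le_lucas : ∀ n, n ≤ lucas n := by
  intro n
  induction n using Nat.twoStepInduction with
  | zero => decide
  | one => decide
  | more n ih1 ih2 => have := lucas_pos n; rw [lucas_add_two]; omega

lemma lucas_mul_int : ∀ n m : ℕ, n ≤ m →
    (lucas (m + n) : ℤ) = lucas m * lucas n - (-1 : ℤ) ^ n * lucas (m - n) := by
  intro n
  induction n using Nat.twoStepInduction with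
  | zero => intro m _; simp [lucas]; ring
  | one =>
    intro m hm
    obtain ⟨t, rfl⟩ := Nat.exists_eq_add_of_le hm
    have e1 : 1 + t + 1 = t + 2 := by omega
    have e2 : 1 + t = t + 1 := by omega
    have e3 : 1 + t - 1 = t := by omega
    rw [e1, e3, e2, lucas_add_two]
    push_cast [lucas]
    ring
  | more n ih1 ih2 =>
    intro m hm
    obtain ⟨t, rfl⟩ := Nat.exists_eq_add_of_le hm
    have h1 := ih1 (n + 2 + t) (by omega)
    have h2 := ih2 (n + 2 + t) (by omega)
    have e1 : n + 2 + t + (n + 2) = (n + 2 + t + n) + 2 := by omega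
    have e2 : n + 2 + t + (n + 1) = (n + 2 + t + n) + 1 := by omega
    have e3 : n + 2 + t - n = t + 2 := by omega
    have e4 : n + 2 + t - (n + 1) = t + 1 := by omega
    have e5 : n + 2 + t - (n + 2) = t := by omega
    rw [e1, lucas_add_two] at *
    rw [e2] at h2
    rw [e3] at h1
    rw [e4] at h2
    rw [e5]
    push_cast [lucas_add_two] at *
    rw [h1, h2]
    ring

lemma lucas_mul_real {n m : ℕ} (hnm : n ≤ m) (hodd : Odd n) :
    (lucas (m + n) : ℝ) = lucas m * lucas n + lucas (m - n) := by
  have h := lucas_mul_int n m hnm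
  rw [hodd.neg_one_pow] at h
  have h2 : (lucas (m + n) : ℤ) = lucas m * lucas n + lucas (m - n) := by linarith
  exact_mod_cast h2

-- step lemma: q = (4j-2)*(p+i) abstracted, hq : constraints
lemma step (lam : ℝ) (hlam : 0 ≤ lam) (j k q : ℕ) (hj : 1 ≤ j)
    (hq : 2 * j ≤ q + 2 * k + 1) (hqe : q % 2 = 0) :
    Real.arctan (lam * (lucas (2 * j - 1) : ℝ) * (lucas (q + 2 * k) : ℝ) /
        ((lucas (2 * q + 4 * k) : ℝ) - (lucas (4 * j - 2) : ℝ) + lam ^ 2))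
      = Real.arctan (lam / (lucas (q + 2 * k + 1 - 2 * j) : ℝ))
        - Real.arctan (lam / (lucas (q + (4 * j - 2) + 2 * k + 1 - 2 * j) : ℝ)) ∧
    0 ≤ Real.arctan (lam * (lucas (2 * j - 1) : ℝ) * (lucas (q + 2 * k) : ℝ) /
        ((lucas (2 * q + 4 * k) : ℝ) - (lucas (4 * j - 2) : ℝ) + lam ^ 2)) := by
  have iA := lucas_mul_real (n := 2 * j - 1) (m := q + 2 * k) (by omega)
    (Nat.odd_iff.mpr (by omega))
  rw [show q + 2 * k + (2 * j - 1) = (q + 2 * k + 1 - 2 * j) + (4 * j - 2) by omega,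
    show q + 2 * k - (2 * j - 1) = q + 2 * k + 1 - 2 * j by omega] at iA
  have iB := lucas_mul_real (n := q + 2 * k + 1 - 2 * j)
    (m := (q + 2 * k + 1 - 2 * j) + (4 * j - 2)) (Nat.le_add_right _ _)
    (Nat.odd_iff.mpr (by omega))
  rw [show (q + 2 * k + 1 - 2 * j) + (4 * j - 2) + (q + 2 * k + 1 - 2 * j) = 2 * q + 4 * k
      by omega,
    Nat.add_sub_cancel_left] at iB
  rw [show q + (4 * j - 2) + 2 * k + 1 - 2 * j = (q + 2 * k + 1 - 2 * j) + (4 * j - 2) by omega]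
  set L1 : ℝ := (lucas (q + 2 * k + 1 - 2 * j) : ℝ) with hL1def
  set L2 : ℝ := (lucas ((q + 2 * k + 1 - 2 * j) + (4 * j - 2)) : ℝ) with hL2def
  have hL1 : 0 < L1 := by rw [hL1def]; exact_mod_cast lucas_pos _
  have hL2 : 0 < L2 := by rw [hL2def]; exact_mod_cast lucas_pos _
  have hnum : (lucas (2 * j - 1) : ℝ) * (lucas (q + 2 * k) : ℝ) = L2 - L1 := by
    rw [mul_comm]; linarith [iA]
  have hden : (lucas (2 * q + 4 * k) : ℝ) - (lucas (4 * j - 2) : ℝ) + lam ^ 2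
      = L2 * L1 + lam ^ 2 := by rw [iB]; ring
  constructor
  · have hprod : (lam / L1) * (-(lam / L2)) < 1 := by
      have h0 : 0 ≤ (lam / L1) * (lam / L2) := by positivity
      nlinarith
    conv_rhs => rw [sub_eq_add_neg, ← Real.arctan_neg]
    rw [Real.arctan_add hprod]
    congr 1
    rw [hden, mul_assoc, hnum]
    have hne1 : L2 * L1 + lam ^ 2 ≠ 0 := by positivity
    have hne2 : lam ^ 2 + L2 * L1 ≠ 0 := by positivity
    have hL1' := hL1.ne'
    have hL2' := hL2.ne'
    field_simp
    rw [sub_neg_eq_add, ← sub_eq_add_neg, mul_right_comm, mul_div_cancel_right₀ _ hne1]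
  · rw [← Real.arctan_zero]
    apply Real.arctan_strictMono.monotone
    apply div_nonneg
    · positivity
    · rw [hden]; positivity

lemma theorem4_aux (lam : ℝ) (hlam : 0 ≤ lam) (j k p : ℕ) (hj : 1 ≤ j)
    (h : 2 * j ≤ (4 * j - 2) * p + 2 * k + 1) :
    HasSum (fun r : ℕ =>
        Real.arctan (lam * (lucas (2 * j - 1) : ℝ) *
            (lucas ((4 * j - 2) * (p + r) + 2 * k) : ℝ) /
          ((lucas ((8 * j - 4) * (p + r) + 4 * k) : ℝ) - (lucas (4 * j - 2) : ℝ) + lam ^ 2)))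
      (Real.arctan (lam / (lucas ((4 * j - 2) * p + 2 * k + 1 - 2 * j) : ℝ))) := by
  have key : ∀ i : ℕ,
      Real.arctan (lam * (lucas (2 * j - 1) : ℝ) *
            (lucas ((4 * j - 2) * (p + i) + 2 * k) : ℝ) /
          ((lucas ((8 * j - 4) * (p + i) + 4 * k) : ℝ) - (lucas (4 * j - 2) : ℝ) + lam ^ 2))
        = Real.arctan (lam / (lucas ((4 * j - 2) * (p + i) + 2 * k + 1 - 2 * j) : ℝ))
          - Real.arctan (lam / (lucas ((4 * j - 2) * (p + (i + 1)) + 2 * k + 1 - 2 * j) : ℝ))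
      ∧ 0 ≤ Real.arctan (lam * (lucas (2 * j - 1) : ℝ) *
            (lucas ((4 * j - 2) * (p + i) + 2 * k) : ℝ) /
          ((lucas ((8 * j - 4) * (p + i) + 4 * k) : ℝ) - (lucas (4 * j - 2) : ℝ) + lam ^ 2)) := by
    intro i
    have hqp : (4 * j - 2) * p ≤ (4 * j - 2) * (p + i) :=
      Nat.mul_le_mul_left _ (Nat.le_add_right p i)
    have hq2 : (8 * j - 4) * (p + i) = 2 * ((4 * j - 2) * (p + i)) := by
      rw [show 8 * j - 4 = 2 * (4 * j - 2) by omega, Nat.mul_assoc]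
    obtain ⟨c, hc⟩ : ∃ c, (4 * j - 2) * (p + i) = 2 * c :=
      ⟨(2 * j - 1) * (p + i), by rw [show 4 * j - 2 = 2 * (2 * j - 1) by omega, Nat.mul_assoc]⟩
    have hstep := step lam hlam j k ((4 * j - 2) * (p + i)) hj (by omega) (by omega)
    rw [hq2, show (4 * j - 2) * (p + (i + 1)) = (4 * j - 2) * (p + i) + (4 * j - 2) by
      rw [show p + (i + 1) = (p + i) + 1 from rfl, Nat.mul_succ]]
    exact hstep
  have hnonneg : ∀ i, 0 ≤ Real.arctan (lam * (lucas (2 * j - 1) : ℝ) *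
            (lucas ((4 * j - 2) * (p + i) + 2 * k) : ℝ) /
          ((lucas ((8 * j - 4) * (p + i) + 4 * k) : ℝ) - (lucas (4 * j - 2) : ℝ) + lam ^ 2)) :=
    fun i => (key i).2
  rw [hasSum_iff_tendsto_nat_of_nonneg hnonneg]
  have hsum : ∀ n, (∑ i ∈ Finset.range n,
      Real.arctan (lam * (lucas (2 * j - 1) : ℝ) *
            (lucas ((4 * j - 2) * (p + i) + 2 * k) : ℝ) /
          ((lucas ((8 * j - 4) * (p + i) + 4 * k) : ℝ) - (lucas (4 * j - 2) : ℝ) + lam ^ 2)))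
      = Real.arctan (lam / (lucas ((4 * j - 2) * (p + 0) + 2 * k + 1 - 2 * j) : ℝ))
        - Real.arctan (lam / (lucas ((4 * j - 2) * (p + n) + 2 * k + 1 - 2 * j) : ℝ)) := by
    intro n
    rw [Finset.sum_congr rfl fun i _ => (key i).1]
    exact Finset.sum_range_sub'
      (fun i => Real.arctan (lam / (lucas ((4 * j - 2) * (p + i) + 2 * k + 1 - 2 * j) : ℝ))) n
  have hgtop : Filter.Tendsto
      (fun n : ℕ => Real.arctan (lam / (lucas ((4 * j - 2) * (p + n) + 2 * k + 1 - 2 * j) : ℝ)))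
      Filter.atTop (nhds 0) := by
    have hbig : ∀ n : ℕ, (n : ℝ) ≤ (lucas ((4 * j - 2) * (p + n) + 2 * k + 1 - 2 * j) : ℝ) := by
      intro n
      have h1 : (4 * j - 2) * (p + n) = (4 * j - 2) * p + (4 * j - 2) * n := Nat.mul_add _ _ _
      have h2 : 2 * n ≤ (4 * j - 2) * n := Nat.mul_le_mul_right n (by omega)
      have h3 := le_lucas ((4 * j - 2) * (p + n) + 2 * k + 1 - 2 * j)
      exact_mod_cast le_trans
        (by omega : n ≤ (4 * j - 2) * (p + n) + 2 * k + 1 - 2 * j) h3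
    have htop : Filter.Tendsto
        (fun n : ℕ => (lucas ((4 * j - 2) * (p + n) + 2 * k + 1 - 2 * j) : ℝ))
        Filter.atTop Filter.atTop :=
      Filter.tendsto_atTop_mono hbig tendsto_natCast_atTop_atTop
    have hdiv : Filter.Tendsto
        (fun n : ℕ => lam / (lucas ((4 * j - 2) * (p + n) + 2 * k + 1 - 2 * j) : ℝ))
        Filter.atTop (nhds 0) := Filter.Tendsto.div_atTop tendsto_const_nhds htop
    have hc := (Real.continuous_arctan.tendsto 0).comp hdiv
    simpa [Function.comp_def] using hc
  have hfin : Filter.Tendsto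
      (fun n : ℕ => Real.arctan (lam / (lucas ((4 * j - 2) * (p + 0) + 2 * k + 1 - 2 * j) : ℝ))
        - Real.arctan (lam / (lucas ((4 * j - 2) * (p + n) + 2 * k + 1 - 2 * j) : ℝ)))
      Filter.atTop
      (nhds (Real.arctan (lam / (lucas ((4 * j - 2) * (p + 0) + 2 * k + 1 - 2 * j) : ℝ)) - 0)) :=
    Filter.Tendsto.sub tendsto_const_nhds hgtop
  rw [sub_zero] at hfin
  have hidx : (4 * j - 2) * (p + 0) = (4 * j - 2) * p := by rw [Nat.add_zero]
  rw [hidx] at hfin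
  convert hfin using 2 with n
  rw [hsum n, hidx]

theorem theorem4 (lam : ℝ) (j k p : ℕ) (hj : 1 ≤ j)
    (h : 2 * j ≤ (4 * j - 2) * p + 2 * k + 1) :
    HasSum (fun r : ℕ =>
        Real.arctan (lam * (lucas (2 * j - 1) : ℝ) *
            (lucas ((4 * j - 2) * (p + r) + 2 * k) : ℝ) /
          ((lucas ((8 * j - 4) * (p + r) + 4 * k) : ℝ) - (lucas (4 * j - 2) : ℝ) + lam ^ 2)))
      (Real.arctan (lam / (lucas ((4 * j - 2) * p + 2 * k + 1 - 2 * j) : ℝ))) := by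
  rcases le_total 0 lam with hl | hl
  · exact theorem4_aux lam hl j k p hj h
  · have H := (theorem4_aux (-lam) (by linarith) j k p hj h).neg
    have e1 : ∀ r : ℕ,
        -(Real.arctan (-lam * (lucas (2 * j - 1) : ℝ) *
            (lucas ((4 * j - 2) * (p + r) + 2 * k) : ℝ) /
          ((lucas ((8 * j - 4) * (p + r) + 4 * k) : ℝ) - (lucas (4 * j - 2) : ℝ) + (-lam) ^ 2)))
        = Real.arctan (lam * (lucas (2 * j - 1) : ℝ) *
            (lucas ((4 * j - 2) * (p + r) + 2 * k) : ℝ) /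
          ((lucas ((8 * j - 4) * (p + r) + 4 * k) : ℝ) - (lucas (4 * j - 2) : ℝ) + lam ^ 2)) := by
      intro r
      rw [neg_sq, show -lam * (lucas (2 * j - 1) : ℝ) *
            (lucas ((4 * j - 2) * (p + r) + 2 * k) : ℝ) = -(lam * (lucas (2 * j - 1) : ℝ) *
            (lucas ((4 * j - 2) * (p + r) + 2 * k) : ℝ)) by ring, neg_div, Real.arctan_neg,
        neg_neg]
    have e2 : -(Real.arctan (-lam / (lucas ((4 * j - 2) * p + 2 * k + 1 - 2 * j) : ℝ)))
        = Real.arctan (lam / (lucas ((4 * j - 2) * p + 2 * k + 1 - 2 * j) : ℝ)) := by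
      rw [neg_div, Real.arctan_neg, neg_neg]
    simpa only [e1, e2] using H
end

section
/- For all natural numbers j ≥ 1 and k ≥ 0, the series ∑_{r=1}^∞ arctan( F_{2j}²·L_{4jr+2k} / F_{4jr+2k}² ) converges and its sum equals arctan( F_{2j} / F_{2j+2k} ). -/
open Real goldenRatio in
lemma lucas_binet : ∀ n : ℕ, (lucas n : ℝ) = φ ^ n + ψ ^ n := by
  intro n
  induction n using Nat.twoStepInduction with
  | zero => norm_num [lucas]
  | one => simp [lucas, goldenRatio_add_goldenConj]
  | more n ih1 ih2 =>
    show ((lucas (n + 1) + lucas n : ℕ) : ℝ) = _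
    push_cast
    rw [ih1, ih2]
    have h1 : φ ^ (n + 2) = φ ^ n * (φ + 1) := by rw [← goldenRatio_sq]; ring
    have h2 : ψ ^ (n + 2) = ψ ^ n * (ψ + 1) := by rw [← goldenConj_sq]; ring
    rw [h1, h2]; ring

open Real goldenRatio in
lemma fib_pow_even (u : ℕ) :
    (Nat.fib (2 * u) : ℝ) = (φ ^ 2) ^ u / √5 - (ψ ^ 2) ^ u / √5 := by
  rw [Real.coe_fib_eq, ← pow_mul, ← pow_mul, sub_div]

open Real goldenRatio in
lemma phi_psi_sq : (φ ^ 2) * (ψ ^ 2) = 1 := by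
  have := goldenRatio_mul_goldenConj
  nlinarith [this]


lemma alg1 (x y z w s : ℝ) (hs : s ≠ 0) (hxy : x * y = 1) :
    (x * z ^ 2 / s - y * w ^ 2 / s) * (x / s - y / s) + (z / s - w / s) ^ 2
      = (x * z / s - y * w / s) ^ 2 := by
  field_simp
  linear_combination (-(z - w) ^ 2) * hxy

lemma alg2 (x y z w s : ℝ) (hs : s ≠ 0) (hzw : z * w = 1) :
    (x * z ^ 2 / s - y * w ^ 2 / s) - (x / s - y / s)
      = (x * z + y * w) * (z / s - w / s) := by
  field_simp
  linear_combination (x - y) * hzw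

open Real goldenRatio in
lemma fibid1 (u v : ℕ) :
    (Nat.fib (2 * u + 4 * v) : ℝ) * Nat.fib (2 * u) + (Nat.fib (2 * v) : ℝ) ^ 2
      = (Nat.fib (2 * u + 2 * v) : ℝ) ^ 2 := by
  have h5 : (√5 : ℝ) ^ 2 = 5 := Real.sq_sqrt (by norm_num)
  have e1 : 2 * u + 4 * v = 2 * (u + 2 * v) := by ring
  have e2 : 2 * u + 2 * v = 2 * (u + v) := by ring
  rw [e1, e2, fib_pow_even, fib_pow_even, fib_pow_even, fib_pow_even]
  set x : ℝ := (φ ^ 2) ^ u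
  set y : ℝ := (ψ ^ 2) ^ u
  set z : ℝ := (φ ^ 2) ^ v
  set w : ℝ := (ψ ^ 2) ^ v
  have hxy : x * y = 1 := by rw [← mul_pow, phi_psi_sq, one_pow]
  have hzw : z * w = 1 := by rw [← mul_pow, phi_psi_sq, one_pow]
  have h1 : (φ ^ 2) ^ (u + 2 * v) = x * z ^ 2 := by rw [pow_add, pow_mul']
  have h2 : (ψ ^ 2) ^ (u + 2 * v) = y * w ^ 2 := by rw [pow_add, pow_mul']
  have h3 : (φ ^ 2) ^ (u + v) = x * z := by rw [pow_add]
  have h4 : (ψ ^ 2) ^ (u + v) = y * w := by rw [pow_add]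
  rw [h1, h2, h3, h4]
  have hs : (√5 : ℝ) ≠ 0 := by positivity
  exact alg1 x y z w (√5) hs hxy

open Real goldenRatio in
lemma fibid2 (u v : ℕ) :
    (Nat.fib (2 * u + 4 * v) : ℝ) - Nat.fib (2 * u)
      = (lucas (2 * u + 2 * v) : ℝ) * Nat.fib (2 * v) := by
  have e1 : 2 * u + 4 * v = 2 * (u + 2 * v) := by ring
  have e2 : 2 * u + 2 * v = 2 * (u + v) := by ring
  rw [e1, e2, fib_pow_even, fib_pow_even, lucas_binet, fib_pow_even]
  set x : ℝ := (φ ^ 2) ^ u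
  set y : ℝ := (ψ ^ 2) ^ u
  set z : ℝ := (φ ^ 2) ^ v
  set w : ℝ := (ψ ^ 2) ^ v
  have hzw : z * w = 1 := by rw [← mul_pow, phi_psi_sq, one_pow]
  have h1 : (φ ^ 2) ^ (u + 2 * v) = x * z ^ 2 := by rw [pow_add, pow_mul']
  have h2 : (ψ ^ 2) ^ (u + 2 * v) = y * w ^ 2 := by rw [pow_add, pow_mul']
  have h3 : φ ^ (2 * (u + v)) = x * z := by rw [pow_mul, pow_add]
  have h4 : ψ ^ (2 * (u + v)) = y * w := by rw [pow_mul, pow_add]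
  rw [h1, h2, h3, h4]
  have hs : (√5 : ℝ) ≠ 0 := by positivity
  exact alg2 x y z w (√5) hs hzw

theorem stmt8 (j k : ℕ) (hj : 1 ≤ j) :
    HasSum (fun r : ℕ =>
        Real.arctan ((Nat.fib (2 * j) : ℝ) ^ 2 * (lucas (4 * j * (1 + r) + 2 * k) : ℝ) /
          (Nat.fib (4 * j * (1 + r) + 2 * k) : ℝ) ^ 2))
      (Real.arctan ((Nat.fib (2 * j) : ℝ) / (Nat.fib (2 * j + 2 * k) : ℝ))) := by
  set c : ℝ := (Nat.fib (2 * j) : ℝ) with hc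
  set t : ℕ → ℝ := fun n => Real.arctan (c / (Nat.fib (4 * j * n + 2 * j + 2 * k) : ℝ)) with ht
  have hcpos : 0 < c := by
    rw [hc]
    have : 0 < Nat.fib (2 * j) := Nat.fib_pos.mpr (by omega)
    exact_mod_cast this
  have hfibpos : ∀ m : ℕ, 0 < m → (0 : ℝ) < (Nat.fib m : ℝ) := by
    intro m hm; exact_mod_cast Nat.fib_pos.mpr hm
  -- step identity
  have step : ∀ r : ℕ,
      Real.arctan ((Nat.fib (2 * j) : ℝ) ^ 2 * (lucas (4 * j * (1 + r) + 2 * k) : ℝ) /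
          (Nat.fib (4 * j * (1 + r) + 2 * k) : ℝ) ^ 2) = t r - t (r + 1) := by
    intro r
    set A : ℝ := (Nat.fib (4 * j * r + 2 * j + 2 * k) : ℝ) with hA
    set B : ℝ := (Nat.fib (4 * j * (r + 1) + 2 * j + 2 * k) : ℝ) with hB
    set M : ℝ := (Nat.fib (4 * j * (1 + r) + 2 * k) : ℝ) with hM
    set L : ℝ := (lucas (4 * j * (1 + r) + 2 * k) : ℝ) with hL
    have hApos : 0 < A := hfibpos _ (by positivity)
    have hBpos : 0 < B := hfibpos _ (by positivity)
    have hMpos : 0 < M := hfibpos _ (by positivity)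
    -- identities with u = 2*j*r + j + k, v = j
    have id1 := fibid1 (2 * j * r + j + k) j
    have id2 := fibid2 (2 * j * r + j + k) j
    have eA : 2 * (2 * j * r + j + k) = 4 * j * r + 2 * j + 2 * k := by ring
    have eB : 4 * j * r + 2 * j + 2 * k + 4 * j = 4 * j * (r + 1) + 2 * j + 2 * k := by ring
    have eM : 4 * j * r + 2 * j + 2 * k + 2 * j = 4 * j * (1 + r) + 2 * k := by ring
    rw [eA] at id1 id2
    rw [eB, eM] at id1 id2
    -- id1 : B * A + c ^ 2 = M ^ 2 ;  id2 : B - A = L * c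
    rw [ht]
    have hsub : Real.arctan (c / A) - Real.arctan (c / B)
        = Real.arctan ((c / A - c / B) / (1 - (c / A) * (-(c / B)))) := by
      have h : (c / A) * (-(c / B)) < 1 := by
        have : 0 < (c / A) * (c / B) := by positivity
        linarith
      rw [sub_eq_add_neg, ← Real.arctan_neg (c / B), Real.arctan_add h]
      ring_nf
    have hval : (c / A - c / B) / (1 - (c / A) * (-(c / B))) = c ^ 2 * L / M ^ 2 := by
      have hM2 : M ^ 2 = B * A + c ^ 2 := id1.symm
      rw [hM2]
      field_simp
      rw [div_eq_iff (show (0:ℝ) < A * B - -c ^ 2 by nlinarith [mul_pos hApos hBpos, sq_nonneg c]).ne']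
      linear_combination (A * B + c ^ 2) * id2
    rw [hsub, hval]
  -- rewrite the function
  have hfun : (fun r : ℕ =>
      Real.arctan ((Nat.fib (2 * j) : ℝ) ^ 2 * (lucas (4 * j * (1 + r) + 2 * k) : ℝ) /
        (Nat.fib (4 * j * (1 + r) + 2 * k) : ℝ) ^ 2)) = fun r => t r - t (r + 1) := by
    funext r; exact step r
  have hnonneg : ∀ r : ℕ, (0 : ℝ) ≤
      Real.arctan ((Nat.fib (2 * j) : ℝ) ^ 2 * (lucas (4 * j * (1 + r) + 2 * k) : ℝ) /
        (Nat.fib (4 * j * (1 + r) + 2 * k) : ℝ) ^ 2) := by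
    intro r
    rw [← Real.arctan_zero]
    exact Real.arctan_strictMono.monotone (by positivity)
  -- t tends to 0
  have hfib_tendsto : Filter.Tendsto (fun n : ℕ => (Nat.fib (4 * j * n + 2 * j + 2 * k) : ℝ))
      Filter.atTop Filter.atTop := by
    apply Filter.tendsto_atTop_mono (f := fun n : ℕ => (n : ℝ))
    · intro n
      have h1 : n + 1 ≤ 4 * j * n + 2 * j + 2 * k := by nlinarith
      have h2 : 4 * j * n + 2 * j + 2 * k ≤ Nat.fib (4 * j * n + 2 * j + 2 * k) + 1 :=
        Nat.le_fib_add_one _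
      have : n ≤ Nat.fib (4 * j * n + 2 * j + 2 * k) := by omega
      exact_mod_cast this
    · exact tendsto_natCast_atTop_atTop
  have ht0 : Filter.Tendsto t Filter.atTop (nhds 0) := by
    have hdiv : Filter.Tendsto (fun n : ℕ => c / (Nat.fib (4 * j * n + 2 * j + 2 * k) : ℝ))
        Filter.atTop (nhds 0) := Filter.Tendsto.div_atTop tendsto_const_nhds hfib_tendsto
    have := (Real.continuous_arctan.tendsto 0).comp hdiv
    simpa [ht, Real.arctan_zero, Function.comp_def] using this
  have hT0 : Real.arctan ((Nat.fib (2 * j) : ℝ) / (Nat.fib (2 * j + 2 * k) : ℝ)) = t 0 := by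
    simp [ht, hc]
  rw [hT0, hasSum_iff_tendsto_nat_of_nonneg hnonneg]
  have hsum : ∀ n : ℕ, ∑ i ∈ Finset.range n,
      Real.arctan ((Nat.fib (2 * j) : ℝ) ^ 2 * (lucas (4 * j * (1 + i) + 2 * k) : ℝ) /
        (Nat.fib (4 * j * (1 + i) + 2 * k) : ℝ) ^ 2) = t 0 - t n := by
    intro n
    rw [hfun]
    exact Finset.sum_range_sub' t n
  simp only [hsum]
  have : Filter.Tendsto (fun n : ℕ => t 0 - t n) Filter.atTop (nhds (t 0 - 0)) :=
    Filter.Tendsto.sub tendsto_const_nhds ht0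
  simpa using this
end

section
/- For all natural numbers j ≥ 1 and p ≥ 1, the series ∑_{r=p}^∞ arctan( √5·F_{4j} / L_{4jr+2j} ) converges and its sum equals arctan( L_{2j} / (√5·F_{4jp}) ). -/
open Real Filter Topology

lemma arctan_step (a b c : ℝ) (ha0 : 0 < a) (hb0 : 0 < b) (hc : c = (a-b)/(1+a*b)) :
    Real.arctan c = Real.arctan a - Real.arctan b := by
  have h1 : (0:ℝ) < 1 + a*b := by positivity
  have hbc : b * c < 1 := by
    rw [hc, mul_div_assoc', div_lt_one h1]
    nlinarith [sq_nonneg b]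
  have hadd := Real.arctan_add hbc
  have harg : (b + c) / (1 - b*c) = a := by
    have e1 : 1 - b*c = (1+b^2)/(1+a*b) := by
      rw [hc]; field_simp; ring
    have e2 : b + c = a*(1+b^2)/(1+a*b) := by
      rw [hc]; field_simp; ring
    rw [e1, e2]
    rw [div_div_div_cancel_right₀]
    · exact mul_div_cancel_right₀ a (by positivity)
    · positivity
  rw [harg] at hadd
  linarith

lemma key0 (s x f l L2 A : ℝ) (hs : s^2=5) (hs0 : 0<s) (hx : 0<x) (hf : 0<f) (hl : 0<l)
    (hL2 : 0<L2) (hA : 0<A) (hI1 : f = x + A*l) (hI2 : 5*(x*f)+L2^2 = l^2) :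
    Real.arctan (s*(A*L2)/l) = Real.arctan (L2/(s*x)) - Real.arctan (L2/(s*f)) := by
  have ha0 : (0:ℝ) < L2/(s*x) := by positivity
  have hb0 : (0:ℝ) < L2/(s*f) := by positivity
  have h1 : (0:ℝ) < 1 + L2/(s*x) * (L2/(s*f)) := by positivity
  refine arctan_step _ _ _ ha0 hb0 ?_
  rw [div_eq_div_iff (hl.ne') h1.ne']
  field_simp
  linear_combination A*x*f*hs + A*hI2 - l*hI1

lemma key (s u x A C : ℝ) (hs : s^2 = 5) (hs0 : 0 < s)
    (hA : 0 < A) (hC : 0 ≤ C) (hu : 0 ≤ u) (hx : 0 < x)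
    (r1 : (C+A)^2 - (C+A)*A - A^2 = 1)
    (r2 : x^2 - x*u - u^2 = -1) :
    Real.arctan (s * (C*A + A*(A+C)) / (u*C + x*A + (u*(C+A) + x*(A + (C+A)))))
      = Real.arctan ((C + (C+A)) / (s*x))
        - Real.arctan ((C + (C+A)) / (s * (u*(C*A + A*(A+C)) + x*(A*A + (C+A)*(C+A))))) := by
  have hL2 : (0:ℝ) < C + (C+A) := by linarith
  have hl0 : (0:ℝ) < u*C + x*A + (u*(C+A) + x*(A + (C+A))) := by
    nlinarith [mul_nonneg hu hC, mul_pos hx hA, mul_nonneg hu (by linarith : (0:ℝ) ≤ C + A),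
      mul_pos hx (by linarith : (0:ℝ) < A + (C+A))]
  have hf0 : (0:ℝ) < u*(C*A + A*(A+C)) + x*(A*A + (C+A)*(C+A)) := by
    nlinarith [mul_nonneg hu (by nlinarith : (0:ℝ) ≤ C*A + A*(A+C)),
      mul_pos hx (by nlinarith : (0:ℝ) < A*A + (C+A)*(C+A))]
  have h := key0 s x (u*(C*A + A*(A+C)) + x*(A*A + (C+A)*(C+A)))
      (u*C + x*A + (u*(C+A) + x*(A + (C+A)))) (C + (C+A)) A hs hs0 hx hf0 hl0 hL2 hA
      (by linear_combination x * r1) (by linear_combination (C + (C+A))^2 * r2)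
  have e : s * (A * (C + (C+A))) = s * (C*A + A*(A+C)) := by ring
  rw [e] at h
  exact h

lemma cassini (n : ℕ) : ((Nat.fib (n+1) : ℤ))^2 - (Nat.fib (n+1) : ℤ) * (Nat.fib n : ℤ)
    - ((Nat.fib n : ℤ))^2 = (-1)^n := by
  induction n with
  | zero => simp
  | succ k ih =>
    have h : (Nat.fib (k+2) : ℤ) = (Nat.fib k : ℤ) + (Nat.fib (k+1) : ℤ) := by
      exact_mod_cast congrArg (Nat.cast : ℕ → ℤ) (Nat.fib_add_two (n := k))
    rw [h, pow_succ]
    linear_combination (-1 : ℤ) * ih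

lemma lucas_succ (n : ℕ) : lucas (n+1) = Nat.fib n + Nat.fib (n+2) := by
  induction n using Nat.twoStepInduction with
  | zero => decide
  | one => decide
  | more k ih1 ih2 =>
    have e1 : lucas (k+2+1) = lucas (k+1+1) + lucas (k+1) := rfl
    rw [e1, ih1, ih2]
    show Nat.fib (k+1) + Nat.fib (k+3) + (Nat.fib k + Nat.fib (k+2)) = Nat.fib (k+2) + Nat.fib (k+4)
    have a1 : Nat.fib (k+2) = Nat.fib k + Nat.fib (k+1) := Nat.fib_add_two
    have a2 : Nat.fib (k+3) = Nat.fib (k+1) + Nat.fib (k+2) := Nat.fib_add_two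
    have a3 : Nat.fib (k+4) = Nat.fib (k+2) + Nat.fib (k+3) := Nat.fib_add_two
    omega

lemma fib_tendsto : Tendsto Nat.fib atTop atTop :=
  Nat.fib_mono.tendsto_atTop_atTop fun b =>
    ⟨b + 5, le_trans (Nat.le_add_right b 5) (Nat.le_fib_self (by omega))⟩

theorem stmt11 (j p : ℕ) (hj : 1 ≤ j) (hp : 1 ≤ p) :
    HasSum (fun r : ℕ =>
        Real.arctan (Real.sqrt 5 * (Nat.fib (4 * j) : ℝ) /
          (lucas (4 * j * (p + r) + 2 * j) : ℝ)))
      (Real.arctan ((lucas (2 * j) : ℝ) / (Real.sqrt 5 * (Nat.fib (4 * j * p) : ℝ)))) := by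
  obtain ⟨i, rfl⟩ : ∃ i, j = i + 1 := ⟨j - 1, by omega⟩
  have hs : Real.sqrt 5 ^ 2 = 5 := Real.sq_sqrt (by norm_num)
  have hs0 : 0 < Real.sqrt 5 := Real.sqrt_pos.mpr (by norm_num)
  set s : ℝ := Real.sqrt 5 with hsdef
  set F : ℕ → ℝ := fun r =>
    Real.arctan ((lucas (2 * (i+1)) : ℝ) / (s * (Nat.fib (4 * (i+1) * (p + r)) : ℝ))) with hF
  have hterm : ∀ r : ℕ,
      Real.arctan (s * (Nat.fib (4 * (i+1)) : ℝ) / (lucas (4 * (i+1) * (p + r) + 2 * (i+1)) : ℝ))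
        = F r - F (r+1) := by
    intro r
    obtain ⟨w, hw⟩ : ∃ w, (i+1)*(p+r) = w+1 := by
      refine ⟨(i+1)*(p+r) - 1, ?_⟩
      have : 0 < (i+1)*(p+r) := Nat.mul_pos (by omega) (by omega)
      omega
    have h4 : 4*(i+1)*(p+r) = 4*w+4 := by rw [mul_assoc, hw]; ring
    have h4' : 4*(i+1)*(p+(r+1)) = 4*w+4 + 4*(i+1) := by
      have e : p + (r+1) = (p+r) + 1 := by ring
      rw [e, Nat.mul_add, mul_assoc, hw]; ring
    -- natural number fib/lucas identities
    have f23 : Nat.fib (2*i+3) = Nat.fib (2*i+1) + Nat.fib (2*i+2) := Nat.fib_add_two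
    have f24 : Nat.fib (2*i+4) = Nat.fib (2*i+2) + Nat.fib (2*i+3) := Nat.fib_add_two
    have f1 : Nat.fib (4*(i+1)) =
        Nat.fib (2*i+1) * Nat.fib (2*i+2) + Nat.fib (2*i+2) * Nat.fib (2*i+3) := by
      have h := Nat.fib_add (2*i+1) (2*i+2)
      have e : (2*i+1)+(2*i+2)+1 = 4*(i+1) := by omega
      rwa [e] at h
    have f2 : Nat.fib (4*i+5) = Nat.fib (2*i+2) * Nat.fib (2*i+2) + Nat.fib (2*i+3) * Nat.fib (2*i+3) := by
      have h := Nat.fib_add (2*i+2) (2*i+2)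
      have e : (2*i+2)+(2*i+2)+1 = 4*i+5 := by omega
      rwa [e] at h
    have f3 : Nat.fib (4*w+4 + 4*(i+1)) =
        Nat.fib (4*w+3) * Nat.fib (4*(i+1)) + Nat.fib (4*w+4) * Nat.fib (4*i+5) := by
      have h := Nat.fib_add (4*w+3) (4*(i+1))
      have e3 : 4*(i+1)+1 = 4*i+5 := by omega
      have e4 : 4*w+3+1 = 4*w+4 := by omega
      rw [e3, e4] at h
      have e : 4*w+3 + 4*(i+1) + 1 = 4*w+4 + 4*(i+1) := by omega
      rwa [e] at h
    have f5a : Nat.fib (4*w+2*i+5) = Nat.fib (4*w+3) * Nat.fib (2*i+1) + Nat.fib (4*w+4) * Nat.fib (2*i+2) := by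
      have h := Nat.fib_add (4*w+3) (2*i+1)
      have e : (4*w+3)+(2*i+1)+1 = 4*w+2*i+5 := by omega
      have e2 : 4*w+3+1 = 4*w+4 := by omega
      have e3 : 2*i+1+1 = 2*i+2 := by omega
      rwa [e, e2, e3] at h
    have f5b : Nat.fib (4*w+2*i+7) = Nat.fib (4*w+3) * Nat.fib (2*i+3) + Nat.fib (4*w+4) * Nat.fib (2*i+4) := by
      have h := Nat.fib_add (4*w+3) (2*i+3)
      have e : (4*w+3)+(2*i+3)+1 = 4*w+2*i+7 := by omega
      have e2 : 4*w+3+1 = 4*w+4 := by omega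
      have e3 : 2*i+3+1 = 2*i+4 := by omega
      rwa [e, e2, e3] at h
    have l1 : lucas (2*(i+1)) = Nat.fib (2*i+1) + Nat.fib (2*i+3) := by
      have h := lucas_succ (2*i+1)
      have e : 2*i+1+1 = 2*(i+1) := by omega
      have e2 : 2*i+1+2 = 2*i+3 := by omega
      rwa [e, e2] at h
    have l2 : lucas (4*(i+1)*(p+r) + 2*(i+1)) = Nat.fib (4*w+2*i+5) + Nat.fib (4*w+2*i+7) := by
      have h := lucas_succ (4*w+2*i+5)
      have e : 4*w+2*i+5+1 = 4*(i+1)*(p+r) + 2*(i+1) := by omega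
      have e2 : 4*w+2*i+5+2 = 4*w+2*i+7 := by omega
      rwa [e, e2] at h
    -- real atoms
    set u : ℝ := (Nat.fib (4*w+3) : ℝ) with hu'
    set x : ℝ := (Nat.fib (4*w+4) : ℝ) with hx'
    set A : ℝ := (Nat.fib (2*i+2) : ℝ) with hA'
    set C : ℝ := (Nat.fib (2*i+1) : ℝ) with hC'
    have hA0 : 0 < A := by
      rw [hA']; exact_mod_cast Nat.fib_pos.mpr (by omega)
    have hx0 : 0 < x := by
      rw [hx']; exact_mod_cast Nat.fib_pos.mpr (by omega)
    have hC0 : 0 ≤ C := by rw [hC']; positivity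
    have hu0 : 0 ≤ u := by rw [hu']; positivity
    have hCA : (Nat.fib (2*i+3) : ℝ) = C + A := by
      rw [hC', hA']; exact_mod_cast congrArg (Nat.cast : ℕ → ℝ) f23
    -- Cassini relations
    have r1 : (C+A)^2 - (C+A)*A - A^2 = 1 := by
      have h := cassini (2*i+2)
      have e : (-1 : ℤ)^(2*i+2) = 1 := by
        rw [pow_add]; simp [pow_mul]
      rw [e] at h
      have e2 : (2*i+2)+1 = 2*i+3 := by omega
      rw [e2] at h
      have hr := congrArg (Int.cast : ℤ → ℝ) h
      push_cast at hr
      rw [hCA, ← hA'] at hr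
      linarith
    have r2 : x^2 - x*u - u^2 = -1 := by
      have h := cassini (4*w+3)
      have e : (-1 : ℤ)^(4*w+3) = -1 := by
        have : Odd (4*w+3) := ⟨2*w+1, by omega⟩
        exact this.neg_one_pow
      rw [e] at h
      have e2 : (4*w+3)+1 = 4*w+4 := by omega
      rw [e2] at h
      have hr := congrArg (Int.cast : ℤ → ℝ) h
      push_cast at hr
      rw [← hx', ← hu'] at hr
      linarith
    -- cast facts
    have E1 : (Nat.fib (4*(i+1)) : ℝ) = C*A + A*(A+C) := by
      have := congrArg (Nat.cast : ℕ → ℝ) f1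
      push_cast at this
      rw [this, hCA]; ring
    have E2 : ((lucas (2*(i+1)) : ℕ) : ℝ) = C + (C+A) := by
      have := congrArg (Nat.cast : ℕ → ℝ) l1
      push_cast at this
      rw [this, hCA]
    have E3 : (Nat.fib (4*(i+1)*(p+r)) : ℝ) = x := by rw [h4]
    have E4 : ((lucas (4*(i+1)*(p+r) + 2*(i+1)) : ℕ) : ℝ)
        = u*C + x*A + (u*(C+A) + x*(A + (C+A))) := by
      have h := congrArg (Nat.cast : ℕ → ℝ) l2
      have ha := congrArg (Nat.cast : ℕ → ℝ) f5a
      have hb := congrArg (Nat.cast : ℕ → ℝ) f5b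
      have hc := congrArg (Nat.cast : ℕ → ℝ) f24
      push_cast at h ha hb hc
      rw [h, ha, hb, hc, hCA]
      try ring
    have E5 : (Nat.fib (4*(i+1)*(p+(r+1))) : ℝ)
        = u*(C*A + A*(A+C)) + x*(A*A + (C+A)*(C+A)) := by
      rw [h4']
      have h := congrArg (Nat.cast : ℕ → ℝ) f3
      have ha := congrArg (Nat.cast : ℕ → ℝ) f2
      push_cast at h ha
      rw [h, ha, hCA]
      try rw [E1]
      try ring
    show Real.arctan (s * (Nat.fib (4*(i+1)) : ℝ) / (lucas (4*(i+1)*(p+r) + 2*(i+1)) : ℝ))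
      = Real.arctan ((lucas (2*(i+1)) : ℝ) / (s * (Nat.fib (4*(i+1)*(p+r)) : ℝ)))
        - Real.arctan ((lucas (2*(i+1)) : ℝ) / (s * (Nat.fib (4*(i+1)*(p+(r+1))) : ℝ)))
    rw [E1, E2, E3, E4, E5]
    exact key s u x A C hs hs0 hA0 hC0 hu0 hx0 r1 r2
  -- summation
  have hnonneg : ∀ r : ℕ, 0 ≤ Real.arctan (s * (Nat.fib (4*(i+1)) : ℝ) /
      (lucas (4*(i+1)*(p+r) + 2*(i+1)) : ℝ)) := by
    intro r
    rw [← Real.arctan_zero]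
    apply Real.arctan_strictMono.monotone
    apply div_nonneg
    · exact mul_nonneg hs0.le (Nat.cast_nonneg _)
    · exact Nat.cast_nonneg _
  refine (hasSum_iff_tendsto_nat_of_nonneg hnonneg _).mpr ?_
  have hsum : (fun n : ℕ => ∑ r ∈ Finset.range n,
      Real.arctan (s * (Nat.fib (4*(i+1)) : ℝ) / (lucas (4*(i+1)*(p+r) + 2*(i+1)) : ℝ)))
      = fun n => F 0 - F n := by
    funext n
    rw [Finset.sum_congr rfl (fun r _ => hterm r)]
    exact Finset.sum_range_sub' F n
  rw [hsum]
  have hlim : Tendsto F atTop (𝓝 0) := by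
    have h1 : Tendsto (fun n : ℕ => 4*(i+1)*(p+n)) atTop atTop := by
      apply tendsto_atTop_mono (fun n => ?_) tendsto_id
      calc (id n : ℕ) ≤ p + n := Nat.le_add_left n p
        _ ≤ 4*(i+1)*(p+n) := Nat.le_mul_of_pos_left _ (by positivity)
    have h2 : Tendsto (fun n : ℕ => (Nat.fib (4*(i+1)*(p+n)) : ℝ)) atTop atTop :=
      tendsto_natCast_atTop_atTop.comp (fib_tendsto.comp h1)
    have h3 : Tendsto (fun n : ℕ =>
        ((lucas (2*(i+1)) : ℕ) : ℝ) / (s * (Nat.fib (4*(i+1)*(p+n)) : ℝ))) atTop (𝓝 0) :=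
      tendsto_const_nhds.div_atTop (h2.const_mul_atTop hs0)
    have h4 := (Real.continuous_arctan.tendsto 0).comp h3
    rw [Real.arctan_zero] at h4
    exact h4
  have hF0 : F 0 = Real.arctan ((lucas (2*(i+1)) : ℝ) / (s * (Nat.fib (4*(i+1)*p) : ℝ))) := by
    simp only [hF, Nat.add_zero]
  have hT : Tendsto (fun n : ℕ => F 0 - F n) atTop (𝓝 (F 0 - 0)) :=
    Tendsto.sub tendsto_const_nhds hlim
  rw [sub_zero] at hT
  rw [← hF0]
  exact hT
end
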